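/- Let V be a type of variables with a constraint system (P, N, S), let (x, y) ∈ S, and let M, T : V → ZFSet be such that M models the literals P and N, the pair (M, T) satisfies the Ξ-conditions for (P, N, S), and M y ∉ M v for every v : V. Then for all u, v : V, M u ∩ M v = ∅ holds if and only if M_{x,y} u ∩ M_{x,y} v = ∅ holds. -/

import Mathlib

/-- `M` models the positive literals `a = b \ c` in `P` and the negative literals
`a ≠ b \ c` in `N`. -/
def ModelsLits {V : Type*} (P N : Finset (V × V × V)) (M : V → ZFSet) : Prop :=
  (∀ t ∈ P, M t.1 = M t.2.1 \ M t.2.2) ∧ (∀ t ∈ N, M t.1 ≠ M t.2.1 \ M t.2.2)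

/-- `M` models the whole constraint system `(P, N, S)`. -/
def ModelsSystem {V : Type*} (P N : Finset (V × V × V)) (S : Finset (V × V))
    (M : V → ZFSet) : Prop :=
  ModelsLits P N M ∧ ∀ p ∈ S, M p.1 = {M p.2}

/-- The pair of assignments `(M, T)` satisfies the Ξ-conditions for the
constraint system `(P, N, S)`. -/
def XiConditions {V : Type*} (S : Finset (V × V)) (M T : V → ZFSet) : Prop :=
  (∀ p ∈ S, ¬ M p.1 ⊆ M p.2) ∧
  (∀ p ∈ S, ∀ q ∈ S, (M p.2 = M q.2 ↔ M p.1 = M q.1)) ∧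
  (∀ p ∈ S, ∀ v : V, M p.1 ∩ M v ≠ ∅ → M p.1 ⊆ M v) ∧
  (∀ p ∈ S, ∀ v : V, M p.1 ∩ M v ≠ ∅ → T p.2 ⊆ T v ∧ T p.2 ≠ T v) ∧
  (∀ u v : V, M u = M v → T u = T v)

open Classical in
/-- The modified assignment `M_{x,y}`. -/
noncomputable def modifyAssign {V : Type*} (M : V → ZFSet) (x y : V) : V → ZFSet :=
  fun v => if M x ∩ M v = ∅ then M v else (M v \ M x) ∪ {M y}

theorem modify_disjoint_iff {V : Type*} (P N : Finset (V × V × V)) (S : Finset (V × V))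
    (x y : V) (hxy : (x, y) ∈ S) (M T : V → ZFSet)
    (hM : ModelsLits P N M) (hXi : XiConditions S M T)
    (hy : ∀ v : V, M y ∉ M v) :
    ∀ u v : V, M u ∩ M v = ∅ ↔ modifyAssign M x y u ∩ modifyAssign M x y v = ∅ := by
  have hsub : ∀ v : V, M x ∩ M v ≠ ∅ → M x ⊆ M v := fun v h => hXi.2.2.1 (x, y) hxy v h
  intro u v
  unfold modifyAssign
  by_cases hu : M x ∩ M u = ∅ <;> by_cases hv : M x ∩ M v = ∅
  · simp [hu, hv]
  · -- u untouched, v touched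
    simp only [if_pos hu, if_neg hv]
    constructor
    · intro h
      rw [ZFSet.eq_empty] at h ⊢
      intro z hz
      rw [ZFSet.mem_inter, ZFSet.mem_union, ZFSet.mem_sdiff, ZFSet.mem_singleton] at hz
      rcases hz with ⟨hzu, hzv | hzy⟩
      · exact h z (ZFSet.mem_inter.2 ⟨hzu, hzv.1⟩)
      · subst hzy; exact hy u hzu
    · intro h
      rw [ZFSet.eq_empty] at h ⊢
      intro z hz
      rw [ZFSet.mem_inter] at hz
      by_cases hzx : z ∈ M x
      · exact ((ZFSet.eq_empty _).1 hu z) (ZFSet.mem_inter.2 ⟨hzx, hz.1⟩)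
      · exact h z (by
          rw [ZFSet.mem_inter, ZFSet.mem_union, ZFSet.mem_sdiff]
          exact ⟨hz.1, Or.inl ⟨hz.2, hzx⟩⟩)
  · -- u touched, v untouched
    simp only [if_neg hu, if_pos hv]
    constructor
    · intro h
      rw [ZFSet.eq_empty] at h ⊢
      intro z hz
      rw [ZFSet.mem_inter, ZFSet.mem_union, ZFSet.mem_sdiff, ZFSet.mem_singleton] at hz
      rcases hz with ⟨hzu | hzy, hzv⟩
      · exact h z (ZFSet.mem_inter.2 ⟨hzu.1, hzv⟩)
      · subst hzy; exact hy v hzv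
    · intro h
      rw [ZFSet.eq_empty] at h ⊢
      intro z hz
      rw [ZFSet.mem_inter] at hz
      by_cases hzx : z ∈ M x
      · exact ((ZFSet.eq_empty _).1 hv z) (ZFSet.mem_inter.2 ⟨hzx, hz.2⟩)
      · exact h z (by
          rw [ZFSet.mem_inter, ZFSet.mem_union, ZFSet.mem_sdiff]
          exact ⟨Or.inl ⟨hz.1, hzx⟩, hz.2⟩)
  · -- both touched
    simp only [if_neg hu, if_neg hv]
    have h1 : ∃ z, z ∈ M x ∩ M u := by
      by_contra h; exact hu ((ZFSet.eq_empty _).2 fun w hw => h ⟨w, hw⟩)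
    obtain ⟨z, hz⟩ := h1
    rw [ZFSet.mem_inter] at hz
    constructor
    · intro h
      exact absurd h (by
        intro he
        exact ((ZFSet.eq_empty _).1 he z) (ZFSet.mem_inter.2 ⟨hz.2, hsub v hv hz.1⟩))
    · intro h
      exact absurd h (by
        intro he
        exact ((ZFSet.eq_empty _).1 he (M y)) (ZFSet.mem_inter.2
          ⟨ZFSet.mem_union.2 (Or.inr (ZFSet.mem_singleton.2 rfl)),
           ZFSet.mem_union.2 (Or.inr (ZFSet.mem_singleton.2 rfl))⟩))
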